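/- For all odd n ≥ 7, there exists a 3-SCHGDD of type (n, 1^4): the base blocks {(i,0), (x_r + i, 1), (x_r + y_r + i, 2)} for 1 ≤ r ≤ (n−1)/2 and 0 ≤ i ≤ n−1, where {{x_r, y_r}} is a quasi-skew starter in Z_n, form the base blocks of a 3-SCHGDD of type (n, 1^4) on Z_n × Z_4 with groups {i} × Z_4 and holes Z_n × {j}. -/
import Mathlib

/-- The multiset of all nonzero elements of `ZMod n`. -/
def nonzeroZMod (n : ℕ) : Multiset (ZMod n) :=
  (Multiset.range (n - 1)).map (fun z => ((z + 1 : ℕ) : ZMod n))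

/-- A quasi-skew starter in `Z_n` given by pair functions `x y : Fin ((n−1)/2) → ZMod n`. -/
def IsQuasiSkewStarter (n : ℕ) (x y : Fin ((n - 1) / 2) → ZMod n) : Prop :=
  (Finset.univ.val.map x + Finset.univ.val.map y) = nonzeroZMod n ∧
  (Finset.univ.val.map (fun r => x r + y r) +
    Finset.univ.val.map (fun r => -(x r + y r))) = nonzeroZMod n

/-- Difference multiset `Δ_{ab}` for blocks on `Z_n × Z_4` (groups `{a} × Z_4`,
holes `Z_n × {j}`). -/
def blockDelta (n : ℕ) (B : Multiset (Finset (ZMod n × ZMod 4))) (a b : ZMod n) :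
    Multiset (ZMod 4) :=
  B.bind (fun bl =>
    ((bl.val ×ˢ bl.val).filter (fun p => p.1.1 = a ∧ p.2.1 = b ∧ p.1 ≠ p.2)).map
      (fun p => p.1.2 - p.2.2))

/-- The base blocks `{(i,0), (x_r + i, 1), (x_r + y_r + i, 2)}`, `1 ≤ r ≤ (n−1)/2`,
`0 ≤ i ≤ n−1`. -/
def starterBlocks (n : ℕ) (x y : Fin ((n - 1) / 2) → ZMod n) :
    Multiset (Finset (ZMod n × ZMod 4)) :=
  (Multiset.range n).bind (fun i =>
    Finset.univ.val.map (fun r : Fin ((n - 1) / 2) =>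
      ({((i : ZMod n), (0 : ZMod 4)),
        (x r + (i : ZMod n), (1 : ZMod 4)),
        (x r + y r + (i : ZMod n), (2 : ZMod 4))} : Finset (ZMod n × ZMod 4))))

section Helpers

lemma count_nonzeroZMod {n : ℕ} (hn : 2 ≤ n) (d : ZMod n) :
    (nonzeroZMod n).count d = if d = 0 then 0 else 1 := by
  haveI : NeZero n := ⟨by omega⟩
  have hinj : ∀ z1 ∈ Multiset.range (n-1), ∀ z2 ∈ Multiset.range (n-1),
      ((z1 + 1 : ℕ) : ZMod n) = ((z2 + 1 : ℕ) : ZMod n) → z1 = z2 := by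
    intro z1 h1 z2 h2 h
    rw [Multiset.mem_range] at h1 h2
    have := congrArg ZMod.val h
    rwa [ZMod.val_natCast_of_lt (by omega), ZMod.val_natCast_of_lt (by omega),
      Nat.add_right_cancel_iff] at this
  have hnd : (nonzeroZMod n).Nodup :=
    Multiset.Nodup.map_on hinj (Multiset.nodup_range _)
  have hmem : ∀ d : ZMod n, d ∈ nonzeroZMod n ↔ d ≠ 0 := by
    intro d
    simp only [nonzeroZMod, Multiset.mem_map, Multiset.mem_range]
    constructor
    · rintro ⟨z, hz, rfl⟩
      rw [Ne, ZMod.natCast_eq_zero_iff]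
      intro hdvd
      have := Nat.le_of_dvd (by omega) hdvd
      omega
    · intro hd
      have hv : d.val ≠ 0 := by
        intro h0
        exact hd (by rw [← ZMod.natCast_rightInverse d, h0, Nat.cast_zero])
      refine ⟨d.val - 1, ?_, ?_⟩
      · have := ZMod.val_lt d
        omega
      · rw [Nat.sub_add_cancel (by omega)]
        exact ZMod.natCast_rightInverse d
  rw [Multiset.count_eq_of_nodup hnd]
  by_cases h : d = 0
  · rw [if_pos h, if_neg]
    rw [hmem]
    simp [h]
  · rw [if_neg h, if_pos ((hmem d).mpr h)]

lemma rangeCast (n : ℕ) [NeZero n] :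
    Multiset.map (fun i : ℕ => (i : ZMod n)) (Multiset.range n)
      = (Finset.univ : Finset (ZMod n)).val := by
  apply Multiset.eq_of_le_of_card_le
  · rw [Multiset.le_iff_count]
    intro a
    have hnd : (Multiset.map (fun i : ℕ => (i : ZMod n)) (Multiset.range n)).Nodup := by
      refine Multiset.Nodup.map_on ?_ (Multiset.nodup_range _)
      intro z1 h1 z2 h2 h
      rw [Multiset.mem_range] at h1 h2
      have := congrArg ZMod.val h
      rwa [ZMod.val_natCast_of_lt h1, ZMod.val_natCast_of_lt h2] at this
    rw [Multiset.count_eq_of_nodup hnd]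
    split
    · rw [Multiset.count_eq_of_nodup (Finset.univ.nodup)]
      simp
    · exact Nat.zero_le _
  · simp [ZMod.card]

lemma bind_ite_eq {n : ℕ} [NeZero n] {β : Type*} (a : ZMod n) (v : Multiset β) :
    ((Finset.univ : Finset (ZMod n)).val.bind fun j => if j = a then v else 0) = v := by
  have : ((Finset.univ : Finset (ZMod n)).val.bind fun j => if j = a then v else 0)
      = ∑ j : ZMod n, if j = a then v else 0 := rfl
  rw [this, Finset.sum_ite_eq' Finset.univ a (fun _ => v), if_pos (Finset.mem_univ a)]

lemma bind_ite_count {α β γ : Type*} [DecidableEq γ] (s : Multiset α) (f : α → γ) (d : γ)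
    (v : Multiset β) :
    (s.bind fun r => if f r = d then v else 0) = (s.map f).count d • v := by
  induction s using Multiset.induction_on with
  | empty => simp
  | cons a s ih =>
    rw [Multiset.cons_bind, ih, Multiset.map_cons, Multiset.count_cons]
    rename_i hh
    split
    · rename_i h
      simp [h, add_nsmul, add_comm]
    · rename_i h
      rw [if_neg (fun hc => h hc.symm)]
      simp

lemma bind_cond_eq {n : ℕ} [NeZero n] {β : Type*} (v : Multiset β) (c : ZMod n)
    (P : ZMod n → Prop) (Q : Prop) [DecidablePred P] [Decidable Q]
    (h : ∀ j, P j ↔ (j = c ∧ Q)) :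
    ((Finset.univ : Finset (ZMod n)).val.bind fun j => if P j then v else 0)
      = if Q then v else 0 := by
  have hj : ∀ j ∈ (Finset.univ : Finset (ZMod n)).val,
      (if P j then v else 0) = if j = c then (if Q then v else 0) else 0 := by
    intro j _
    rw [if_congr (h j) rfl rfl, ite_and]
  rw [Multiset.bind_congr hj, bind_ite_eq]

lemma delta_block {n : ℕ} (w0 w1 w2 a b : ZMod n) :
    (((({(w0, (0 : ZMod 4)), (w1, (1 : ZMod 4)), (w2, (2 : ZMod 4))} :
        Finset (ZMod n × ZMod 4)).val ×ˢ
      ({(w0, (0 : ZMod 4)), (w1, (1 : ZMod 4)), (w2, (2 : ZMod 4))} :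
        Finset (ZMod n × ZMod 4)).val).filter
          (fun p => p.1.1 = a ∧ p.2.1 = b ∧ p.1 ≠ p.2)).map (fun p => p.1.2 - p.2.2))
    = (if w0 = a ∧ w1 = b then ({3} : Multiset (ZMod 4)) else 0)
    + (if w0 = a ∧ w2 = b then {2} else 0)
    + (if w1 = a ∧ w0 = b then {1} else 0)
    + (if w1 = a ∧ w2 = b then {3} else 0)
    + (if w2 = a ∧ w0 = b then {2} else 0)
    + (if w2 = a ∧ w1 = b then {1} else 0) := by
  set p0 : ZMod n × ZMod 4 := (w0, 0) with hp0
  set p1 : ZMod n × ZMod 4 := (w1, 1) with hp1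
  set p2 : ZMod n × ZMod 4 := (w2, 2) with hp2
  have e01 : ((0 : ZMod 4)) ≠ 1 := by decide
  have e10 : ((1 : ZMod 4)) ≠ 0 := by decide
  have e20 : ((2 : ZMod 4)) ≠ 0 := by decide
  have e21 : ((2 : ZMod 4)) ≠ 1 := by decide
  have e02 : ((0 : ZMod 4)) ≠ 2 := by decide
  have e12 : ((1 : ZMod 4)) ≠ 2 := by decide
  have h01 : p0 ≠ p1 := fun h => e01 (congrArg Prod.snd h)
  have h02 : p0 ≠ p2 := fun h => e02 (congrArg Prod.snd h)
  have h12 : p1 ≠ p2 := fun h => e12 (congrArg Prod.snd h)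
  have hm1 : p1 ∉ ({p2} : Finset (ZMod n × ZMod 4)) := by simpa using h12
  have hm0 : p0 ∉ ({p1, p2} : Finset (ZMod n × ZMod 4)) := by
    simp only [Finset.mem_insert, Finset.mem_singleton]
    push_neg
    exact ⟨h01, h02⟩
  have hval : ({p0, p1, p2} : Finset (ZMod n × ZMod 4)).val = p0 ::ₘ p1 ::ₘ {p2} := by
    rw [show ({p0, p1, p2} : Finset (ZMod n × ZMod 4)) = insert p0 (insert p1 {p2}) from rfl,
      Finset.insert_val_of_notMem hm0, Finset.insert_val_of_notMem hm1,
      Finset.singleton_val]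
  rw [hval]
  rw [show ({p2} : Multiset (ZMod n × ZMod 4)) = p2 ::ₘ 0 from rfl]
  simp only [Multiset.cons_product, Multiset.product_cons, Multiset.zero_product,
    Multiset.product_zero, Multiset.map_cons, Multiset.map_zero, Multiset.map_singleton,
    Multiset.filter_add, Multiset.filter_cons, Multiset.filter_zero, Multiset.map_add,
    add_zero, zero_add]
  have d01 : (0 : ZMod 4) - 1 = 3 := by decide
  have d02 : (0 : ZMod 4) - 2 = 2 := by decide
  have d10 : (1 : ZMod 4) - 0 = 1 := by decide
  have d20 : (2 : ZMod 4) - 0 = 2 := by decide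
  have d12 : (1 : ZMod 4) - 2 = 3 := by decide
  have d21 : (2 : ZMod 4) - 1 = 1 := by decide
  simp only [hp0, hp1, hp2, Prod.mk.injEq, ne_eq, not_and, and_true, apply_ite
    (Multiset.map (fun x : (ZMod n × ZMod 4) × (ZMod n × ZMod 4) => x.1.2 - x.2.2)),
    Multiset.map_singleton, Multiset.map_zero, d01, d02, d10, d20, d12, d21,
    e01, e02, e12, e10, e20, e21, not_true, not_false_iff, and_false, if_false, and_true,
    implies_true, add_zero, zero_add]
  abel

end Helpers

/-- For odd `n ≥ 7`, the blocks built from a quasi-skew starter form the base blocks of a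
`3`-SCHGDD of type `(n, 1^4)` on `Z_n × Z_4` with groups `{a} × Z_4` and holes
`Z_n × {j}`: every block has size `3`, `Δ_{ab} = Z_4 \ {0}` for `a ≠ b`, and
`Δ_{aa} = ∅`. -/
theorem schgdd_of_quasiSkewStarter (n : ℕ) (hn : 7 ≤ n) (hodd : Odd n)
    (x y : Fin ((n - 1) / 2) → ZMod n) (hxy : IsQuasiSkewStarter n x y) :
    (∀ bl ∈ starterBlocks n x y, bl.card = 3) ∧
    (∀ a b : ZMod n, a ≠ b →
      blockDelta n (starterBlocks n x y) a b = ({1, 2, 3} : Multiset (ZMod 4))) ∧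
    (∀ a : ZMod n, blockDelta n (starterBlocks n x y) a a = 0) := by
  haveI : NeZero n := ⟨by omega⟩
  obtain ⟨hst1, hst2⟩ := hxy
  -- count facts
  have hcnt : ∀ d : ZMod n, (nonzeroZMod n).count d = if d = 0 then 0 else 1 :=
    count_nonzeroZMod (by omega)
  have hxycnt : ∀ d : ZMod n,
      (Finset.univ.val.map x).count d + (Finset.univ.val.map y).count d
        = if d = 0 then 0 else 1 := by
    intro d
    rw [← Multiset.count_add, hst1]
    exact hcnt d
  have hscnt : ∀ d : ZMod n,
      (Finset.univ.val.map (fun r => x r + y r)).count d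
        + (Finset.univ.val.map (fun r => x r + y r)).count (-d)
        = if d = 0 then 0 else 1 := by
    intro d
    have hneg : (Finset.univ.val.map (fun r => -(x r + y r))).count d
        = (Finset.univ.val.map (fun r => x r + y r)).count (-d) := by
      rw [show (fun r : Fin ((n-1)/2) => -(x r + y r))
          = (fun t : ZMod n => -t) ∘ (fun r => x r + y r) from rfl,
        ← Multiset.map_map]
      rw [show d = -(-d) from (neg_neg d).symm]
      rw [Multiset.count_map_eq_count' _ _ neg_injective]
      simp
    rw [← hneg, ← Multiset.count_add, hst2]
    exact hcnt d
  -- the master formula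
  have key : ∀ a b : ZMod n, blockDelta n (starterBlocks n x y) a b
      = ((Finset.univ.val.map x).count (b - a)
          + (Finset.univ.val.map y).count (b - a)) • ({3} : Multiset (ZMod 4))
        + ((Finset.univ.val.map (fun r => x r + y r)).count (b - a)
          + (Finset.univ.val.map (fun r => x r + y r)).count (a - b)) • {2}
        + ((Finset.univ.val.map x).count (a - b)
          + (Finset.univ.val.map y).count (a - b)) • {1} := by
    intro a b
    rw [blockDelta, starterBlocks, Multiset.bind_assoc]
    simp only [Multiset.bind_map, delta_block]
    -- replace the range-bind by a bind over all of ZMod n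
    trans ((Finset.univ : Finset (ZMod n)).val.bind fun j =>
      (Finset.univ.val.bind fun r : Fin ((n-1)/2) =>
        (if j = a ∧ x r + j = b then ({3} : Multiset (ZMod 4)) else 0)
        + (if j = a ∧ x r + y r + j = b then {2} else 0)
        + (if x r + j = a ∧ j = b then {1} else 0)
        + (if x r + j = a ∧ x r + y r + j = b then {3} else 0)
        + (if x r + y r + j = a ∧ j = b then {2} else 0)
        + (if x r + y r + j = a ∧ x r + j = b then {1} else 0)))
    · rw [← rangeCast n, Multiset.bind_map]
    -- swap the two binds
    rw [Multiset.bind_bind]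
    -- evaluate the inner bind over j for each fixed r
    have inner : ∀ r : Fin ((n-1)/2),
        ((Finset.univ : Finset (ZMod n)).val.bind fun j =>
          (if j = a ∧ x r + j = b then ({3} : Multiset (ZMod 4)) else 0)
          + (if j = a ∧ x r + y r + j = b then {2} else 0)
          + (if x r + j = a ∧ j = b then {1} else 0)
          + (if x r + j = a ∧ x r + y r + j = b then {3} else 0)
          + (if x r + y r + j = a ∧ j = b then {2} else 0)
          + (if x r + y r + j = a ∧ x r + j = b then {1} else 0))
        = (if x r = b - a then ({3} : Multiset (ZMod 4)) else 0)
          + (if x r + y r = b - a then {2} else 0)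
          + (if x r = a - b then {1} else 0)
          + (if y r = b - a then {3} else 0)
          + (if x r + y r = a - b then {2} else 0)
          + (if y r = a - b then {1} else 0) := by
      intro r
      have c1 : ∀ j : ZMod n, (j = a ∧ x r + j = b) ↔ (j = a ∧ x r = b - a) := by
        intro j
        constructor
        · rintro ⟨rfl, h⟩
          exact ⟨rfl, by rw [eq_sub_iff_add_eq]; exact h⟩
        · rintro ⟨rfl, h⟩
          exact ⟨rfl, by rw [eq_sub_iff_add_eq] at h; exact h⟩
      have c2 : ∀ j : ZMod n, (j = a ∧ x r + y r + j = b) ↔ (j = a ∧ x r + y r = b - a) := by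
        intro j
        constructor
        · rintro ⟨rfl, h⟩
          exact ⟨rfl, by rw [eq_sub_iff_add_eq]; exact h⟩
        · rintro ⟨rfl, h⟩
          exact ⟨rfl, by rw [eq_sub_iff_add_eq] at h; exact h⟩
      have c3 : ∀ j : ZMod n, (x r + j = a ∧ j = b) ↔ (j = b ∧ x r = a - b) := by
        intro j
        constructor
        · rintro ⟨h, rfl⟩
          exact ⟨rfl, by rw [eq_sub_iff_add_eq]; exact h⟩
        · rintro ⟨rfl, h⟩
          exact ⟨by rw [eq_sub_iff_add_eq] at h; exact h, rfl⟩
      have c4 : ∀ j : ZMod n,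
          (x r + j = a ∧ x r + y r + j = b) ↔ (j = a - x r ∧ y r = b - a) := by
        intro j
        constructor
        · rintro ⟨h1, h2⟩
          refine ⟨by rw [eq_sub_iff_add_eq, add_comm]; exact h1, ?_⟩
          rw [eq_sub_iff_add_eq, ← h1, ← h2]
          ring
        · rintro ⟨rfl, h2⟩
          rw [eq_sub_iff_add_eq] at h2
          constructor
          · ring
          · rw [← h2]; ring
      have c5 : ∀ j : ZMod n, (x r + y r + j = a ∧ j = b) ↔ (j = b ∧ x r + y r = a - b) := by
        intro j
        constructor
        · rintro ⟨h, rfl⟩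
          exact ⟨rfl, by rw [eq_sub_iff_add_eq]; exact h⟩
        · rintro ⟨rfl, h⟩
          exact ⟨by rw [eq_sub_iff_add_eq] at h; exact h, rfl⟩
      have c6 : ∀ j : ZMod n,
          (x r + y r + j = a ∧ x r + j = b) ↔ (j = b - x r ∧ y r = a - b) := by
        intro j
        constructor
        · rintro ⟨h1, h2⟩
          refine ⟨by rw [eq_sub_iff_add_eq, add_comm]; exact h2, ?_⟩
          rw [eq_sub_iff_add_eq, ← h1, ← h2]
          ring
        · rintro ⟨rfl, h2⟩
          rw [eq_sub_iff_add_eq] at h2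
          constructor
          · rw [← h2]; ring
          · ring
      simp only [Multiset.bind_add]
      rw [bind_cond_eq _ a _ _ c1, bind_cond_eq _ a _ _ c2, bind_cond_eq _ b _ _ c3,
        bind_cond_eq _ (a - x r) _ _ c4, bind_cond_eq _ b _ _ c5,
        bind_cond_eq _ (b - x r) _ _ c6]
    rw [Multiset.bind_congr (fun r _ => inner r)]
    simp only [Multiset.bind_add]
    rw [bind_ite_count Finset.univ.val x (b - a) ({3} : Multiset (ZMod 4)),
      bind_ite_count Finset.univ.val (fun r => x r + y r) (b - a) ({2} : Multiset (ZMod 4)),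
      bind_ite_count Finset.univ.val x (a - b) ({1} : Multiset (ZMod 4)),
      bind_ite_count Finset.univ.val y (b - a) ({3} : Multiset (ZMod 4)),
      bind_ite_count Finset.univ.val (fun r => x r + y r) (a - b) ({2} : Multiset (ZMod 4)),
      bind_ite_count Finset.univ.val y (a - b) ({1} : Multiset (ZMod 4))]
    simp only [add_nsmul]
    abel
  refine ⟨?_, ?_, ?_⟩
  · -- every block has three points
    intro bl hbl
    rw [starterBlocks] at hbl
    rw [Multiset.mem_bind] at hbl
    obtain ⟨i, _, hbl⟩ := hbl
    rw [Multiset.mem_map] at hbl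
    obtain ⟨r, _, rfl⟩ := hbl
    have e01 : ((0 : ZMod 4)) ≠ 1 := by decide
    have e02 : ((0 : ZMod 4)) ≠ 2 := by decide
    have e12 : ((1 : ZMod 4)) ≠ 2 := by decide
    rw [Finset.card_insert_of_notMem, Finset.card_insert_of_notMem, Finset.card_singleton]
    · simp only [Finset.mem_singleton]
      exact fun h => e12 (congrArg Prod.snd h)
    · simp only [Finset.mem_insert, Finset.mem_singleton]
      push_neg
      exact ⟨fun h => e01 (congrArg Prod.snd h), fun h => e02 (congrArg Prod.snd h)⟩
  · -- a ≠ b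
    intro a b hab
    have hd : b - a ≠ 0 := sub_ne_zero.mpr (Ne.symm hab)
    have hd' : a - b ≠ 0 := sub_ne_zero.mpr hab
    rw [key a b]
    have h1 := hxycnt (b - a)
    have h2 := hxycnt (a - b)
    have h3 := hscnt (b - a)
    rw [if_neg hd] at h1 h3
    rw [if_neg hd'] at h2
    rw [show a - b = -(b - a) from (neg_sub b a).symm] at h2 ⊢
    rw [h1, h3, hxycnt, if_neg (by simpa using hd')]
    decide
  · -- a = a
    intro a
    rw [key a a, sub_self]
    have h0 := hxycnt 0
    rw [if_pos rfl] at h0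
    have hx0 : (Finset.univ.val.map x).count (0 : ZMod n) = 0 := by omega
    have hy0 : (Finset.univ.val.map y).count (0 : ZMod n) = 0 := by omega
    have hs0' := hscnt 0
    rw [if_pos rfl, neg_zero] at hs0'
    have hs0 : (Finset.univ.val.map (fun r => x r + y r)).count (0 : ZMod n) = 0 := by omega
    rw [hx0, hy0, hs0]
    simp
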